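/- For every σ > 0 and all h_- < h_+ there exist δ₊ = δ₊(σ, h_+−h_-) ∈ (0,1) and δ₋ = δ₋(σ, h_+−h_-) ∈ (0,1) such that for every q ≥ σ, every bounded measurable lG : ℝ → ℝ, and every integer j ≥ 2: sup_{x ≥ h_+} |V⁺_j(x)| ≤ δ₊ · sup_{x ≤ h_-} |V⁻_{j−1}(x)| and sup_{x ≤ h_-} |V⁻_j(x)| ≤ δ₋ · sup_{x ≥ h_+} |V⁺_{j−1}(x)|. -/

import Mathlib

open MeasureTheory ProbabilityTheory Set
open scoped ENNReal

/-- First entrance time of `x + X_t` into `[h, ∞)`, with `inf ∅ = ∞`. -/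
noncomputable def tauPlus {Ω : Type*} (X : ℝ → Ω → ℝ) (x h : ℝ) (ω : Ω) : ℝ≥0∞ :=
  sInf ((fun s : ℝ => ENNReal.ofReal s) '' {s : ℝ | 0 ≤ s ∧ h ≤ x + X s ω})

/-- First entrance time of `x + X_t` into `(-∞, h]`, with `inf ∅ = ∞`. -/
noncomputable def tauMinus {Ω : Type*} (X : ℝ → Ω → ℝ) (x h : ℝ) (ω : Ω) : ℝ≥0∞ :=
  sInf ((fun s : ℝ => ENNReal.ofReal s) '' {s : ℝ | 0 ≤ s ∧ x + X s ω ≤ h})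

/-- The discount factor `1_{t<∞} e^{-q t}`. -/
noncomputable def levyDiscount (q : ℝ) (t : ℝ≥0∞) : ℝ :=
  if t = ⊤ then 0 else Real.exp (-(q * t.toReal))

/-- `Ṽ⁰(x) = ∫_0^∞ e^{-qt} E[lG(x + X_t)] dt`, the Laplace transform of the European price. -/
noncomputable def Vzero {Ω : Type*} [MeasurableSpace Ω] (P : Measure Ω)
    (X : ℝ → Ω → ℝ) (q : ℝ) (lG : ℝ → ℝ) (x : ℝ) : ℝ :=
  ∫ t in Set.Ioi (0 : ℝ), Real.exp (-(q * t)) * ∫ ω, lG (x + X t ω) ∂P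

/-- The pair `(V⁺_j, V⁻_j)` of the recursion; index `0` corresponds to `(Ṽ⁰, Ṽ⁰)`, so that
`V⁺_1(x) = E[1_{τ⁺<∞} e^{-q τ⁺} Ṽ⁰(x + X_{τ⁺})]`, and for `j ≥ 2` the function `V⁺_j`
uses `V⁻_{j-1}` and `V⁻_j` uses `V⁺_{j-1}`. -/
noncomputable def VSeq {Ω : Type*} [MeasurableSpace Ω] (P : Measure Ω)
    (X : ℝ → Ω → ℝ) (q hm hp : ℝ) (lG : ℝ → ℝ) : ℕ → (ℝ → ℝ) × (ℝ → ℝ)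
  | 0 => (Vzero P X q lG, Vzero P X q lG)
  | j + 1 =>
      (fun x => ∫ ω, levyDiscount q (tauPlus X x hp ω) *
          (VSeq P X q hm hp lG j).2 (x + X (tauPlus X x hp ω).toReal ω) ∂P,
       fun x => ∫ ω, levyDiscount q (tauMinus X x hm ω) *
          (VSeq P X q hm hp lG j).1 (x + X (tauMinus X x hm ω).toReal ω) ∂P)


open Filter Topology

section AuxLemmas

variable {Ω : Type*}

lemma levyDiscount_nonneg (q : ℝ) (t : ℝ≥0∞) : 0 ≤ levyDiscount q t := by
  unfold levyDiscount; split
  · exact le_refl 0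
  · exact (Real.exp_pos _).le

lemma levyDiscount_le_one {q : ℝ} (hq : 0 ≤ q) (t : ℝ≥0∞) : levyDiscount q t ≤ 1 := by
  unfold levyDiscount; split
  · norm_num
  · exact Real.exp_le_one_iff.mpr (neg_nonpos.mpr (mul_nonneg hq ENNReal.toReal_nonneg))

/-- `sInf` of the `ofReal` image of a nonempty set of nonnegative reals. -/
lemma sInf_ofReal_image {T : Set ℝ} (hT : T.Nonempty) (h0 : ∀ s ∈ T, 0 ≤ s) :
    sInf ((fun s : ℝ => ENNReal.ofReal s) '' T) = ENNReal.ofReal (sInf T) := by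
  have hbdd : BddBelow T := ⟨0, fun s hs => h0 s hs⟩
  exact (Monotone.map_csInf_of_continuousAt (ENNReal.continuous_ofReal.continuousAt)
    (fun a b hab => ENNReal.ofReal_le_ofReal hab) hT hbdd).symm

/-- For a right-continuous path, the debut of a closed set is attained. -/
lemma csInf_mem_hitting {g : ℝ → ℝ} (hg : ∀ t, ContinuousWithinAt g (Ici t) t)
    {C : Set ℝ} (hC : IsClosed C) (hne : {s : ℝ | 0 ≤ s ∧ g s ∈ C}.Nonempty) :
    sInf {s : ℝ | 0 ≤ s ∧ g s ∈ C} ∈ {s : ℝ | 0 ≤ s ∧ g s ∈ C} := by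
  set T := {s : ℝ | 0 ≤ s ∧ g s ∈ C} with hTdef
  have hbdd : BddBelow T := ⟨0, fun s hs => hs.1⟩
  have ht0 : 0 ≤ sInf T := le_csInf hne fun s hs => hs.1
  obtain ⟨u, hu_mem, hu_tend⟩ := mem_closure_iff_seq_limit.mp (csInf_mem_closure hne hbdd)
  have hu_ge : ∀ n, sInf T ≤ u n := fun n => csInf_le hbdd (hu_mem n)
  have htend : Tendsto u atTop (𝓝[Ici (sInf T)] (sInf T)) :=
    tendsto_nhdsWithin_of_tendsto_nhds_of_eventually_within u hu_tend
      (Eventually.of_forall hu_ge)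
  have hcomp : Tendsto (fun n => g (u n)) atTop (𝓝 (g (sInf T))) :=
    (hg (sInf T)).tendsto.comp htend
  exact ⟨ht0, hC.mem_of_tendsto hcomp (Eventually.of_forall fun n => (hu_mem n).2)⟩

lemma tauMinus_spec {X : ℝ → Ω → ℝ} {ω : Ω}
    (hrcω : ∀ t, ContinuousWithinAt (fun s => X s ω) (Ici t) t)
    {x h : ℝ} (hfin : tauMinus X x h ω ≠ ⊤) :
    x + X (tauMinus X x h ω).toReal ω ≤ h := by
  set T := {s : ℝ | 0 ≤ s ∧ x + X s ω ≤ h} with hTdef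
  have hne : T.Nonempty := by
    by_contra hemp
    rw [not_nonempty_iff_eq_empty] at hemp
    apply hfin
    rw [tauMinus, hTdef] at *
    rw [hemp, image_empty, sInf_empty]
  have h0 : ∀ s ∈ T, 0 ≤ s := fun s hs => hs.1
  have hrepr : tauMinus X x h ω = ENNReal.ofReal (sInf T) := sInf_ofReal_image hne h0
  have ht0 : 0 ≤ sInf T := le_csInf hne fun s hs => hs.1
  have htoReal : (tauMinus X x h ω).toReal = sInf T := by
    rw [hrepr, ENNReal.toReal_ofReal ht0]
  have hCclosed : IsClosed {y : ℝ | x + y ≤ h} :=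
    isClosed_le (continuous_const.add continuous_id) continuous_const
  have hmem := csInf_mem_hitting hrcω hCclosed (C := {y : ℝ | x + y ≤ h}) hne
  rw [htoReal]
  exact hmem.2

lemma tauPlus_spec {X : ℝ → Ω → ℝ} {ω : Ω}
    (hrcω : ∀ t, ContinuousWithinAt (fun s => X s ω) (Ici t) t)
    {x h : ℝ} (hfin : tauPlus X x h ω ≠ ⊤) :
    h ≤ x + X (tauPlus X x h ω).toReal ω := by
  set T := {s : ℝ | 0 ≤ s ∧ h ≤ x + X s ω} with hTdef
  have hne : T.Nonempty := by
    by_contra hemp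
    rw [not_nonempty_iff_eq_empty] at hemp
    apply hfin
    rw [tauPlus, hTdef] at *
    rw [hemp, image_empty, sInf_empty]
  have h0 : ∀ s ∈ T, 0 ≤ s := fun s hs => hs.1
  have hrepr : tauPlus X x h ω = ENNReal.ofReal (sInf T) := sInf_ofReal_image hne h0
  have ht0 : 0 ≤ sInf T := le_csInf hne fun s hs => hs.1
  have htoReal : (tauPlus X x h ω).toReal = sInf T := by
    rw [hrepr, ENNReal.toReal_ofReal ht0]
  have hCclosed : IsClosed {y : ℝ | h ≤ x + y} :=
    isClosed_le continuous_const (continuous_const.add continuous_id)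
  have hmem := csInf_mem_hitting hrcω hCclosed (C := {y : ℝ | h ≤ x + y}) hne
  rw [htoReal]
  exact hmem.2

lemma tauMinus_lt_exists {X : ℝ → Ω → ℝ} {ω : Ω} {x h t₀ : ℝ} (ht₀ : 0 < t₀)
    (hlt : tauMinus X x h ω < ENNReal.ofReal t₀) :
    ∃ s : ℝ, 0 ≤ s ∧ s < t₀ ∧ x + X s ω ≤ h := by
  set T := {s : ℝ | 0 ≤ s ∧ x + X s ω ≤ h} with hTdef
  have hne : T.Nonempty := by
    by_contra hemp
    rw [not_nonempty_iff_eq_empty] at hemp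
    rw [tauMinus] at hlt
    rw [← hTdef, hemp, image_empty, sInf_empty] at hlt
    exact (not_top_lt hlt)
  have h0 : ∀ s ∈ T, 0 ≤ s := fun s hs => hs.1
  have hrepr : tauMinus X x h ω = ENNReal.ofReal (sInf T) := sInf_ofReal_image hne h0
  rw [hrepr, ENNReal.ofReal_lt_ofReal_iff ht₀] at hlt
  obtain ⟨s, hsT, hst⟩ := exists_lt_of_csInf_lt hne hlt
  exact ⟨s, hsT.1, hst, hsT.2⟩

lemma tauPlus_lt_exists {X : ℝ → Ω → ℝ} {ω : Ω} {x h t₀ : ℝ} (ht₀ : 0 < t₀)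
    (hlt : tauPlus X x h ω < ENNReal.ofReal t₀) :
    ∃ s : ℝ, 0 ≤ s ∧ s < t₀ ∧ h ≤ x + X s ω := by
  set T := {s : ℝ | 0 ≤ s ∧ h ≤ x + X s ω} with hTdef
  have hne : T.Nonempty := by
    by_contra hemp
    rw [not_nonempty_iff_eq_empty] at hemp
    rw [tauPlus] at hlt
    rw [← hTdef, hemp, image_empty, sInf_empty] at hlt
    exact (not_top_lt hlt)
  have h0 : ∀ s ∈ T, 0 ≤ s := fun s hs => hs.1
  have hrepr : tauPlus X x h ω = ENNReal.ofReal (sInf T) := sInf_ofReal_image hne h0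
  rw [hrepr, ENNReal.ofReal_lt_ofReal_iff ht₀] at hlt
  obtain ⟨s, hsT, hst⟩ := exists_lt_of_csInf_lt hne hlt
  exact ⟨s, hsT.1, hst, hsT.2⟩

/-- From a real time where the path is below `c`, find a rational one (right continuity). -/
lemma exists_rat_le_of_lt {X : ℝ → Ω → ℝ} {ω : Ω}
    (hrcω : ∀ t, ContinuousWithinAt (fun s => X s ω) (Ici t) t)
    {s t₀ c : ℝ} (hs0 : 0 ≤ s) (hst : s < t₀) (hv : X s ω < c) :
    ∃ r : ℚ, 0 ≤ (r : ℝ) ∧ (r : ℝ) < t₀ ∧ X (r : ℝ) ω ≤ c := by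
  have h1 : ∀ᶠ u in 𝓝[Ici s] s, X u ω < c := (hrcω s) (Iio_mem_nhds hv)
  have h2 : ∀ᶠ u in 𝓝[Ici s] s, u < t₀ :=
    mem_nhdsWithin_of_mem_nhds (Iio_mem_nhds hst)
  obtain ⟨u, hu, hsub⟩ := mem_nhdsGE_iff_exists_Ico_subset.mp (h1.and h2)
  obtain ⟨r, hr1, hr2⟩ := exists_rat_btwn (mem_Ioi.mp hu)
  have hrIco : (r : ℝ) ∈ Ico s u := ⟨hr1.le, hr2⟩
  obtain ⟨hrv, hrt⟩ := hsub hrIco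
  exact ⟨r, hs0.trans hr1.le, hrt, hrv.le⟩

lemma exists_rat_ge_of_lt {X : ℝ → Ω → ℝ} {ω : Ω}
    (hrcω : ∀ t, ContinuousWithinAt (fun s => X s ω) (Ici t) t)
    {s t₀ c : ℝ} (hs0 : 0 ≤ s) (hst : s < t₀) (hv : c < X s ω) :
    ∃ r : ℚ, 0 ≤ (r : ℝ) ∧ (r : ℝ) < t₀ ∧ c ≤ X (r : ℝ) ω := by
  have h1 : ∀ᶠ u in 𝓝[Ici s] s, c < X u ω := (hrcω s) (Ioi_mem_nhds hv)
  have h2 : ∀ᶠ u in 𝓝[Ici s] s, u < t₀ :=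
    mem_nhdsWithin_of_mem_nhds (Iio_mem_nhds hst)
  obtain ⟨u, hu, hsub⟩ := mem_nhdsGE_iff_exists_Ico_subset.mp (h1.and h2)
  obtain ⟨r, hr1, hr2⟩ := exists_rat_btwn (mem_Ioi.mp hu)
  have hrIco : (r : ℝ) ∈ Ico s u := ⟨hr1.le, hr2⟩
  obtain ⟨hrv, hrt⟩ := hsub hrIco
  exact ⟨r, hs0.trans hr1.le, hrt, hrv.le⟩

/-- The event that at some rational time `< t` the path is `≤ c`. -/
def ratEventLe (X : ℝ → Ω → ℝ) (c t : ℝ) : Set Ω :=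
  ⋃ (r : ℚ) (_ : 0 ≤ (r : ℝ) ∧ (r : ℝ) < t), {ω | X (r : ℝ) ω ≤ c}

/-- The event that at some rational time `< t` the path is `≥ c`. -/
def ratEventGe (X : ℝ → Ω → ℝ) (c t : ℝ) : Set Ω :=
  ⋃ (r : ℚ) (_ : 0 ≤ (r : ℝ) ∧ (r : ℝ) < t), {ω | c ≤ X (r : ℝ) ω}

lemma ratEventLe_measurable {X : ℝ → Ω → ℝ} [MeasurableSpace Ω]
    (hMeas : ∀ t : ℝ, Measurable (X t)) (c t : ℝ) :
    MeasurableSet (ratEventLe X c t) :=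
  MeasurableSet.iUnion fun r => MeasurableSet.iUnion fun _ =>
    (hMeas (r : ℝ)) measurableSet_Iic

lemma ratEventGe_measurable {X : ℝ → Ω → ℝ} [MeasurableSpace Ω]
    (hMeas : ∀ t : ℝ, Measurable (X t)) (c t : ℝ) :
    MeasurableSet (ratEventGe X c t) :=
  MeasurableSet.iUnion fun r => MeasurableSet.iUnion fun _ =>
    (hMeas (r : ℝ)) measurableSet_Ici

lemma mem_ratEventLe_of_tauMinus_lt {X : ℝ → Ω → ℝ} {ω : Ω}
    (hrcω : ∀ t, ContinuousWithinAt (fun s => X s ω) (Ici t) t)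
    {x hm hp t₀ : ℝ} (hmp : hm < hp) (hx : hp ≤ x) (ht₀ : 0 < t₀)
    (h : tauMinus X x hm ω < ENNReal.ofReal t₀) :
    ω ∈ ratEventLe X ((hm - hp) / 2) t₀ := by
  obtain ⟨s, hs0, hst, hsv⟩ := tauMinus_lt_exists ht₀ h
  have hlt : X s ω < (hm - hp) / 2 := by linarith
  obtain ⟨r, hr0, hrt, hrv⟩ := exists_rat_le_of_lt hrcω hs0 hst hlt
  exact mem_iUnion.mpr ⟨r, mem_iUnion.mpr ⟨⟨hr0, hrt⟩, hrv⟩⟩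

lemma mem_ratEventGe_of_tauPlus_lt {X : ℝ → Ω → ℝ} {ω : Ω}
    (hrcω : ∀ t, ContinuousWithinAt (fun s => X s ω) (Ici t) t)
    {x hm hp t₀ : ℝ} (hmp : hm < hp) (hx : x ≤ hm) (ht₀ : 0 < t₀)
    (h : tauPlus X x hp ω < ENNReal.ofReal t₀) :
    ω ∈ ratEventGe X ((hp - hm) / 2) t₀ := by
  obtain ⟨s, hs0, hst, hsv⟩ := tauPlus_lt_exists ht₀ h
  have hlt : (hp - hm) / 2 < X s ω := by linarith
  obtain ⟨r, hr0, hrt, hrv⟩ := exists_rat_ge_of_lt hrcω hs0 hst hlt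
  exact mem_iUnion.mpr ⟨r, mem_iUnion.mpr ⟨⟨hr0, hrt⟩, hrv⟩⟩

end AuxLemmas

section AuxLemmas2

variable {Ω : Type*}

lemma exists_small_ratEventLe [MeasurableSpace Ω] (P : Measure Ω) [IsProbabilityMeasure P]
    {X : ℝ → Ω → ℝ} (hMeas : ∀ t : ℝ, Measurable (X t))
    (hrc : ∀ ω : Ω, ∀ t : ℝ, ContinuousWithinAt (fun s => X s ω) (Ici t) t)
    (hX0 : ∀ᵐ ω ∂P, X 0 ω = 0) {c : ℝ} (hc : c < 0) :
    ∃ t : ℝ, 0 < t ∧ P (ratEventLe X c t) ≤ ENNReal.ofReal (1/2) := by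
  set B : ℕ → Set Ω := fun n => ratEventLe X c (1 / (n + 1 : ℝ)) with hB
  have hBmeas : ∀ n, NullMeasurableSet (B n) P := fun n =>
    (ratEventLe_measurable hMeas _ _).nullMeasurableSet
  have hanti : Antitone B := by
    intro m n hmn ω hω
    simp only [hB, ratEventLe, mem_iUnion] at hω ⊢
    obtain ⟨r, ⟨hr0, hrlt⟩, hrv⟩ := hω
    refine ⟨r, ⟨hr0, hrlt.trans_le ?_⟩, hrv⟩
    apply one_div_le_one_div_of_le (by positivity)
    have : (m : ℝ) ≤ (n : ℝ) := by exact_mod_cast hmn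
    linarith
  have hsub : (⋂ n, B n) ⊆ {ω | X 0 ω ≤ c} := by
    intro ω hω
    have hex : ∀ n : ℕ, ∃ r : ℚ, 0 ≤ (r:ℝ) ∧ (r:ℝ) < 1/(n+1:ℝ) ∧ X (r:ℝ) ω ≤ c := by
      intro n
      have hn := mem_iInter.mp hω n
      simp only [hB, ratEventLe, mem_iUnion] at hn
      obtain ⟨r, ⟨h1, h2⟩, h3⟩ := hn
      exact ⟨r, h1, h2, h3⟩
    choose r hr0 hrlt hrv using hex
    have hrt : Tendsto (fun n => (r n : ℝ)) atTop (𝓝 0) :=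
      squeeze_zero hr0 (fun n => (hrlt n).le) tendsto_one_div_add_atTop_nhds_zero_nat
    have hrt' : Tendsto (fun n => (r n : ℝ)) atTop (𝓝[Ici (0:ℝ)] 0) :=
      tendsto_nhdsWithin_of_tendsto_nhds_of_eventually_within _ hrt (Eventually.of_forall hr0)
    have hXlim : Tendsto (fun n => X (r n : ℝ) ω) atTop (𝓝 (X 0 ω)) :=
      (hrc ω 0).tendsto.comp hrt'
    exact le_of_tendsto hXlim (Eventually.of_forall hrv)
  have hnull : P {ω | X 0 ω ≤ c} = 0 := by
    have hsub2 : {ω | X 0 ω ≤ c} ⊆ {ω | ¬ (X 0 ω = 0)} := by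
      intro ω hω h0
      rw [mem_setOf_eq, h0] at hω
      linarith
    exact measure_mono_null hsub2 (ae_iff.mp hX0)
  have h0 : P (⋂ n, B n) = 0 := measure_mono_null hsub hnull
  have hlim : Tendsto (fun n => P (B n)) atTop (𝓝 0) := by
    have := tendsto_measure_iInter_atTop hBmeas hanti ⟨0, measure_ne_top _ _⟩
    rwa [h0] at this
  have hev : ∀ᶠ n in atTop, P (B n) < ENNReal.ofReal (1/2) :=
    hlim.eventually_lt_const (ENNReal.ofReal_pos.mpr (by norm_num))
  obtain ⟨n, hn⟩ := hev.exists
  exact ⟨1/(n+1:ℝ), by positivity, hn.le⟩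

lemma exists_small_ratEventGe [MeasurableSpace Ω] (P : Measure Ω) [IsProbabilityMeasure P]
    {X : ℝ → Ω → ℝ} (hMeas : ∀ t : ℝ, Measurable (X t))
    (hrc : ∀ ω : Ω, ∀ t : ℝ, ContinuousWithinAt (fun s => X s ω) (Ici t) t)
    (hX0 : ∀ᵐ ω ∂P, X 0 ω = 0) {c : ℝ} (hc : 0 < c) :
    ∃ t : ℝ, 0 < t ∧ P (ratEventGe X c t) ≤ ENNReal.ofReal (1/2) := by
  set B : ℕ → Set Ω := fun n => ratEventGe X c (1 / (n + 1 : ℝ)) with hB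
  have hBmeas : ∀ n, NullMeasurableSet (B n) P := fun n =>
    (ratEventGe_measurable hMeas _ _).nullMeasurableSet
  have hanti : Antitone B := by
    intro m n hmn ω hω
    simp only [hB, ratEventGe, mem_iUnion] at hω ⊢
    obtain ⟨r, ⟨hr0, hrlt⟩, hrv⟩ := hω
    refine ⟨r, ⟨hr0, hrlt.trans_le ?_⟩, hrv⟩
    apply one_div_le_one_div_of_le (by positivity)
    have : (m : ℝ) ≤ (n : ℝ) := by exact_mod_cast hmn
    linarith
  have hsub : (⋂ n, B n) ⊆ {ω | c ≤ X 0 ω} := by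
    intro ω hω
    have hex : ∀ n : ℕ, ∃ r : ℚ, 0 ≤ (r:ℝ) ∧ (r:ℝ) < 1/(n+1:ℝ) ∧ c ≤ X (r:ℝ) ω := by
      intro n
      have hn := mem_iInter.mp hω n
      simp only [hB, ratEventGe, mem_iUnion] at hn
      obtain ⟨r, ⟨h1, h2⟩, h3⟩ := hn
      exact ⟨r, h1, h2, h3⟩
    choose r hr0 hrlt hrv using hex
    have hrt : Tendsto (fun n => (r n : ℝ)) atTop (𝓝 0) :=
      squeeze_zero hr0 (fun n => (hrlt n).le) tendsto_one_div_add_atTop_nhds_zero_nat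
    have hrt' : Tendsto (fun n => (r n : ℝ)) atTop (𝓝[Ici (0:ℝ)] 0) :=
      tendsto_nhdsWithin_of_tendsto_nhds_of_eventually_within _ hrt (Eventually.of_forall hr0)
    have hXlim : Tendsto (fun n => X (r n : ℝ) ω) atTop (𝓝 (X 0 ω)) :=
      (hrc ω 0).tendsto.comp hrt'
    exact ge_of_tendsto hXlim (Eventually.of_forall hrv)
  have hnull : P {ω | c ≤ X 0 ω} = 0 := by
    have hsub2 : {ω | c ≤ X 0 ω} ⊆ {ω | ¬ (X 0 ω = 0)} := by
      intro ω hω h0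
      rw [mem_setOf_eq, h0] at hω
      linarith
    exact measure_mono_null hsub2 (ae_iff.mp hX0)
  have h0 : P (⋂ n, B n) = 0 := measure_mono_null hsub hnull
  have hlim : Tendsto (fun n => P (B n)) atTop (𝓝 0) := by
    have := tendsto_measure_iInter_atTop hBmeas hanti ⟨0, measure_ne_top _ _⟩
    rwa [h0] at this
  have hev : ∀ᶠ n in atTop, P (B n) < ENNReal.ofReal (1/2) :=
    hlim.eventually_lt_const (ENNReal.ofReal_pos.mpr (by norm_num))
  obtain ⟨n, hn⟩ := hev.exists
  exact ⟨1/(n+1:ℝ), by positivity, hn.le⟩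

lemma biSup_abs_nonneg (f : ℝ → ℝ) (s : Set ℝ) : 0 ≤ ⨆ x ∈ s, |f x| :=
  Real.iSup_nonneg fun _ => Real.iSup_nonneg fun _ => abs_nonneg _

lemma le_biSup_abs {f : ℝ → ℝ} {s : Set ℝ} {K : ℝ} (hb : ∀ x, |f x| ≤ K)
    {y : ℝ} (hy : y ∈ s) : |f y| ≤ ⨆ x ∈ s, |f x| := by
  have hbdd : BddAbove (Set.range fun x => ⨆ _ : x ∈ s, |f x|) := by
    refine ⟨max K 0, ?_⟩
    rintro _ ⟨x, rfl⟩
    show (⨆ _ : x ∈ s, |f x|) ≤ max K 0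
    by_cases hx : x ∈ s
    · rw [ciSup_pos (f := fun _ => |f x|) hx]; exact le_max_of_le_left (hb x)
    · haveI : IsEmpty (x ∈ s) := isEmpty_Prop.mpr hx
      rw [Real.iSup_of_isEmpty]
      exact le_max_right _ _
  calc |f y| = ⨆ _ : y ∈ s, |f y| := (ciSup_pos (f := fun _ => |f y|) hy).symm
    _ ≤ ⨆ x ∈ s, |f x| := le_ciSup hbdd y

lemma biSup_abs_le {f : ℝ → ℝ} {s : Set ℝ} {a : ℝ} (ha : 0 ≤ a)
    (h : ∀ x ∈ s, |f x| ≤ a) : (⨆ x ∈ s, |f x|) ≤ a :=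
  Real.iSup_le (fun x => Real.iSup_le (fun hx => h x hx) ha) ha

end AuxLemmas2

section AuxLemmas3

variable {Ω : Type*} [MeasurableSpace Ω]

lemma VSeq_fst_eq_of_ge (P : Measure Ω) [IsProbabilityMeasure P] (X : ℝ → Ω → ℝ)
    (q hm hp : ℝ) (lG : ℝ → ℝ) (hX0 : ∀ᵐ ω ∂P, X 0 ω = 0)
    {x : ℝ} (hx : hp ≤ x) (m : ℕ) :
    (VSeq P X q hm hp lG (m+1)).1 x = (VSeq P X q hm hp lG m).2 x := by
  have key : ∀ᵐ ω ∂P, levyDiscount q (tauPlus X x hp ω) *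
      (VSeq P X q hm hp lG m).2 (x + X (tauPlus X x hp ω).toReal ω)
      = (VSeq P X q hm hp lG m).2 x := by
    filter_upwards [hX0] with ω h0
    have hτ : tauPlus X x hp ω = 0 := by
      refine le_antisymm ?_ zero_le
      have hmem : (0 : ℝ≥0∞) ∈ ((fun s : ℝ => ENNReal.ofReal s) ''
          {s : ℝ | 0 ≤ s ∧ hp ≤ x + X s ω}) :=
        ⟨0, ⟨le_refl 0, by rw [h0, add_zero]; exact hx⟩, by simp⟩
      exact sInf_le hmem
    rw [hτ]
    simp [levyDiscount, h0]
  have hdef : (VSeq P X q hm hp lG (m+1)).1 x = ∫ ω, levyDiscount q (tauPlus X x hp ω) *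
      (VSeq P X q hm hp lG m).2 (x + X (tauPlus X x hp ω).toReal ω) ∂P := rfl
  rw [hdef, integral_congr_ae key, integral_const, probReal_univ]
  simp

lemma VSeq_snd_eq_of_le (P : Measure Ω) [IsProbabilityMeasure P] (X : ℝ → Ω → ℝ)
    (q hm hp : ℝ) (lG : ℝ → ℝ) (hX0 : ∀ᵐ ω ∂P, X 0 ω = 0)
    {x : ℝ} (hx : x ≤ hm) (m : ℕ) :
    (VSeq P X q hm hp lG (m+1)).2 x = (VSeq P X q hm hp lG m).1 x := by
  have key : ∀ᵐ ω ∂P, levyDiscount q (tauMinus X x hm ω) *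
      (VSeq P X q hm hp lG m).1 (x + X (tauMinus X x hm ω).toReal ω)
      = (VSeq P X q hm hp lG m).1 x := by
    filter_upwards [hX0] with ω h0
    have hτ : tauMinus X x hm ω = 0 := by
      refine le_antisymm ?_ zero_le
      have hmem : (0 : ℝ≥0∞) ∈ ((fun s : ℝ => ENNReal.ofReal s) ''
          {s : ℝ | 0 ≤ s ∧ x + X s ω ≤ hm}) :=
        ⟨0, ⟨le_refl 0, by rw [h0, add_zero]; exact hx⟩, by simp⟩
      exact sInf_le hmem
    rw [hτ]
    simp [levyDiscount, h0]
  have hdef : (VSeq P X q hm hp lG (m+1)).2 x = ∫ ω, levyDiscount q (tauMinus X x hm ω) *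
      (VSeq P X q hm hp lG m).1 (x + X (tauMinus X x hm ω).toReal ω) ∂P := rfl
  rw [hdef, integral_congr_ae key, integral_const, probReal_univ]
  simp

lemma abs_integral_discount_le (P : Measure Ω) [IsProbabilityMeasure P]
    {q : ℝ} (hq : 0 ≤ q) (τfun : Ω → ℝ≥0∞) (Y : Ω → ℝ)
    {W : ℝ → ℝ} {K : ℝ} (hK : 0 ≤ K) (hW : ∀ y, |W y| ≤ K) :
    |∫ ω, levyDiscount q (τfun ω) * W (Y ω) ∂P| ≤ K := by
  rw [← Real.norm_eq_abs]
  refine (norm_integral_le_of_norm_le_const (C := K) ?_).trans (by simp [measure_univ])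
  refine Eventually.of_forall fun ω => ?_
  rw [Real.norm_eq_abs, abs_mul]
  have h1 : |levyDiscount q (τfun ω)| ≤ 1 := by
    rw [abs_of_nonneg (levyDiscount_nonneg q _)]
    exact levyDiscount_le_one hq _
  calc |levyDiscount q (τfun ω)| * |W (Y ω)| ≤ 1 * K :=
        mul_le_mul h1 (hW _) (abs_nonneg _) zero_le_one
    _ = K := one_mul K

lemma abs_Vzero_le (P : Measure Ω) [IsProbabilityMeasure P] (X : ℝ → Ω → ℝ)
    {q : ℝ} (hq : 0 < q) {lG : ℝ → ℝ} {C : ℝ} (hC0 : 0 ≤ C) (hC : ∀ y, |lG y| ≤ C) (x : ℝ) :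
    |Vzero P X q lG x| ≤ ∫ t in Ioi (0:ℝ), Real.exp (-(q*t)) * C := by
  have hint : IntegrableOn (fun t => Real.exp (-(q*t)) * C) (Ioi (0:ℝ)) := by
    have := (exp_neg_integrableOn_Ioi 0 hq).mul_const C
    simpa [neg_mul, IntegrableOn] using this
  have hinner : ∀ t : ℝ, |∫ ω, lG (x + X t ω) ∂P| ≤ C := by
    intro t
    have h := norm_integral_le_of_norm_le_const (μ := P)
      (f := fun ω => lG (x + X t ω)) (C := C)
      (Eventually.of_forall fun ω => by rw [Real.norm_eq_abs]; exact hC _)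
    rw [Real.norm_eq_abs] at h
    simpa [measure_univ] using h
  have hEq : ∫⁻ t in Ioi (0:ℝ), ENNReal.ofReal (Real.exp (-(q*t)) * C)
      = ENNReal.ofReal (∫ t in Ioi (0:ℝ), Real.exp (-(q*t)) * C) :=
    (ofReal_integral_eq_lintegral_ofReal hint
      (Eventually.of_forall fun t => mul_nonneg (Real.exp_pos _).le hC0)).symm
  rw [Vzero, ← Real.norm_eq_abs]
  calc ‖∫ t in Ioi (0:ℝ), Real.exp (-(q*t)) * ∫ ω, lG (x + X t ω) ∂P‖
      ≤ (∫⁻ t in Ioi (0:ℝ),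
          ENNReal.ofReal ‖Real.exp (-(q*t)) * ∫ ω, lG (x + X t ω) ∂P‖).toReal :=
        norm_integral_le_lintegral_norm _
    _ ≤ (∫⁻ t in Ioi (0:ℝ), ENNReal.ofReal (Real.exp (-(q*t)) * C)).toReal := by
        apply ENNReal.toReal_mono
        · rw [hEq]; exact ENNReal.ofReal_ne_top
        · apply lintegral_mono
          intro t
          apply ENNReal.ofReal_le_ofReal
          rw [Real.norm_eq_abs, abs_mul, abs_of_pos (Real.exp_pos _)]
          exact mul_le_mul_of_nonneg_left (hinner t) (Real.exp_pos _).le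
    _ = ∫ t in Ioi (0:ℝ), Real.exp (-(q*t)) * C := by
        rw [hEq, ENNReal.toReal_ofReal
          (integral_nonneg fun t => mul_nonneg (Real.exp_pos _).le hC0)]

lemma VSeq_abs_le (P : Measure Ω) [IsProbabilityMeasure P] (X : ℝ → Ω → ℝ)
    (hm hp : ℝ) {q : ℝ} (hq : 0 < q)
    {lG : ℝ → ℝ} {C : ℝ} (hC0 : 0 ≤ C) (hC : ∀ y, |lG y| ≤ C) :
    ∃ K : ℝ, 0 ≤ K ∧ ∀ k x, |(VSeq P X q hm hp lG k).1 x| ≤ K ∧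
      |(VSeq P X q hm hp lG k).2 x| ≤ K := by
  set K := ∫ t in Ioi (0:ℝ), Real.exp (-(q*t)) * C with hK
  have hK0 : 0 ≤ K := integral_nonneg fun t => mul_nonneg (Real.exp_pos _).le hC0
  refine ⟨K, hK0, ?_⟩
  intro k
  induction k with
  | zero =>
    intro x
    exact ⟨abs_Vzero_le P X hq hC0 hC x, abs_Vzero_le P X hq hC0 hC x⟩
  | succ n ih =>
    intro x
    constructor
    · have hdef : (VSeq P X q hm hp lG (n+1)).1 x = ∫ ω, levyDiscount q (tauPlus X x hp ω) *
          (VSeq P X q hm hp lG n).2 (x + X (tauPlus X x hp ω).toReal ω) ∂P := rfl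
      rw [hdef]
      exact abs_integral_discount_le P hq.le _ _ hK0 (fun y => (ih y).2)
    · have hdef : (VSeq P X q hm hp lG (n+1)).2 x = ∫ ω, levyDiscount q (tauMinus X x hm ω) *
          (VSeq P X q hm hp lG n).1 (x + X (tauMinus X x hm ω).toReal ω) ∂P := rfl
      rw [hdef]
      exact abs_integral_discount_le P hq.le _ _ hK0 (fun y => (ih y).1)

end AuxLemmas3

section CoreEstimate

variable {Ω : Type*} [MeasurableSpace Ω]

lemma core_minus (P : Measure Ω) [IsProbabilityMeasure P] {X : ℝ → Ω → ℝ}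
    (hMeas : ∀ t : ℝ, Measurable (X t))
    (hrc : ∀ ω : Ω, ∀ t : ℝ, ContinuousWithinAt (fun s => X s ω) (Ici t) t)
    {σ q hm hp t₀ : ℝ} (hσ : 0 < σ) (hq : σ ≤ q) (hmp : hm < hp) (ht₀ : 0 < t₀)
    (hA : P (ratEventLe X ((hm - hp)/2) t₀) ≤ ENNReal.ofReal (1/2))
    {W : ℝ → ℝ} {S : ℝ} (hS : 0 ≤ S) (hW : ∀ y, y ≤ hm → |W y| ≤ S)
    {x : ℝ} (hx : hp ≤ x) :
    |∫ ω, levyDiscount q (tauMinus X x hm ω) * W (x + X (tauMinus X x hm ω).toReal ω) ∂P|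
      ≤ (Real.exp (-(σ*t₀)) + (1 - Real.exp (-(σ*t₀))) * (1/2)) * S := by
  set e := Real.exp (-(σ*t₀)) with he
  have he0 : 0 < e := Real.exp_pos _
  have he1 : e < 1 := Real.exp_lt_one_iff.mpr (by nlinarith)
  set A := ratEventLe X ((hm - hp)/2) t₀ with hAdef
  have hq0 : 0 < q := lt_of_lt_of_le hσ hq
  have hAm : MeasurableSet A := ratEventLe_measurable hMeas _ _
  set F : Ω → ℝ := fun ω =>
    levyDiscount q (tauMinus X x hm ω) * W (x + X (tauMinus X x hm ω).toReal ω) with hF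
  have hpt : ∀ ω, ENNReal.ofReal ‖F ω‖
      ≤ (ENNReal.ofReal e + ENNReal.ofReal (1 - e) * A.indicator 1 ω) * ENNReal.ofReal S := by
    intro ω
    by_cases hfin : tauMinus X x hm ω = ⊤
    · have hz : levyDiscount q (tauMinus X x hm ω) = 0 := by
        rw [hfin]; simp [levyDiscount]
      rw [hF]
      simp only [Real.norm_eq_abs, hz, zero_mul, abs_zero, ENNReal.ofReal_zero]
      exact zero_le
    · have hy : x + X (tauMinus X x hm ω).toReal ω ≤ hm := tauMinus_spec (hrc ω) hfin
      have hWy : |W (x + X (tauMinus X x hm ω).toReal ω)| ≤ S := hW _ hy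
      have hd0 : 0 ≤ levyDiscount q (tauMinus X x hm ω) := levyDiscount_nonneg _ _
      rw [hF]
      simp only [Real.norm_eq_abs, abs_mul, abs_of_nonneg hd0]
      by_cases hAω : ω ∈ A
      · have hcoef : ENNReal.ofReal e + ENNReal.ofReal (1 - e) * A.indicator 1 ω
            = 1 := by
          rw [indicator_of_mem hAω, Pi.one_apply, mul_one,
            ← ENNReal.ofReal_add he0.le (by linarith)]
          rw [show e + (1 - e) = 1 by ring, ENNReal.ofReal_one]
        rw [hcoef, one_mul]
        apply ENNReal.ofReal_le_ofReal
        calc levyDiscount q (tauMinus X x hm ω) * |W (x + X (tauMinus X x hm ω).toReal ω)|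
            ≤ 1 * S := mul_le_mul (levyDiscount_le_one hq0.le _) hWy (abs_nonneg _) zero_le_one
          _ = S := one_mul S
      · have hge : ENNReal.ofReal t₀ ≤ tauMinus X x hm ω := by
          by_contra hcon
          exact hAω (mem_ratEventLe_of_tauMinus_lt (hrc ω) hmp hx ht₀ (not_le.mp hcon))
        have htR : t₀ ≤ (tauMinus X x hm ω).toReal :=
          (ENNReal.ofReal_le_iff_le_toReal hfin).mp hge
        have hd : levyDiscount q (tauMinus X x hm ω) ≤ e := by
          rw [levyDiscount, if_neg hfin, he]
          apply Real.exp_le_exp.mpr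
          apply neg_le_neg
          exact mul_le_mul hq htR ht₀.le hq0.le
        have hcoef : ENNReal.ofReal e + ENNReal.ofReal (1 - e) * A.indicator 1 ω
            = ENNReal.ofReal e := by
          rw [indicator_of_notMem hAω, mul_zero, add_zero]
        rw [hcoef, ← ENNReal.ofReal_mul he0.le]
        apply ENNReal.ofReal_le_ofReal
        exact mul_le_mul hd hWy (abs_nonneg _) he0.le
  have hlin : ∫⁻ ω, (ENNReal.ofReal e + ENNReal.ofReal (1 - e) * A.indicator 1 ω)
      * ENNReal.ofReal S ∂P
      = (ENNReal.ofReal e + ENNReal.ofReal (1 - e) * P A) * ENNReal.ofReal S := by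
    rw [lintegral_mul_const' _ _ ENNReal.ofReal_ne_top]
    congr 1
    rw [lintegral_add_left measurable_const, lintegral_const, measure_univ, mul_one,
      lintegral_const_mul _ (measurable_one.indicator hAm), lintegral_indicator_one hAm]
  have hbound : ∫⁻ ω, ENNReal.ofReal ‖F ω‖ ∂P
      ≤ ENNReal.ofReal ((e + (1 - e) * (1/2)) * S) := by
    calc ∫⁻ ω, ENNReal.ofReal ‖F ω‖ ∂P
        ≤ ∫⁻ ω, (ENNReal.ofReal e + ENNReal.ofReal (1 - e) * A.indicator 1 ω)
            * ENNReal.ofReal S ∂P := lintegral_mono hpt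
      _ = (ENNReal.ofReal e + ENNReal.ofReal (1 - e) * P A) * ENNReal.ofReal S := hlin
      _ ≤ (ENNReal.ofReal e + ENNReal.ofReal (1 - e) * ENNReal.ofReal (1/2))
            * ENNReal.ofReal S := by
          exact mul_le_mul_left (add_le_add le_rfl (mul_le_mul_right hA _)) _
      _ = ENNReal.ofReal ((e + (1 - e) * (1/2)) * S) := by
          rw [← ENNReal.ofReal_mul (by linarith),
            ← ENNReal.ofReal_add he0.le (mul_nonneg (by linarith) (by norm_num)),
            ← ENNReal.ofReal_mul (by nlinarith)]
  calc |∫ ω, F ω ∂P| = ‖∫ ω, F ω ∂P‖ := (Real.norm_eq_abs _).symm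
    _ ≤ (∫⁻ ω, ENNReal.ofReal ‖F ω‖ ∂P).toReal := norm_integral_le_lintegral_norm _
    _ ≤ (ENNReal.ofReal ((e + (1 - e) * (1/2)) * S)).toReal :=
        ENNReal.toReal_mono ENNReal.ofReal_ne_top hbound
    _ = (e + (1 - e) * (1/2)) * S := ENNReal.toReal_ofReal
        (mul_nonneg (by nlinarith) hS)

lemma core_plus (P : Measure Ω) [IsProbabilityMeasure P] {X : ℝ → Ω → ℝ}
    (hMeas : ∀ t : ℝ, Measurable (X t))
    (hrc : ∀ ω : Ω, ∀ t : ℝ, ContinuousWithinAt (fun s => X s ω) (Ici t) t)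
    {σ q hm hp t₀ : ℝ} (hσ : 0 < σ) (hq : σ ≤ q) (hmp : hm < hp) (ht₀ : 0 < t₀)
    (hA : P (ratEventGe X ((hp - hm)/2) t₀) ≤ ENNReal.ofReal (1/2))
    {W : ℝ → ℝ} {S : ℝ} (hS : 0 ≤ S) (hW : ∀ y, hp ≤ y → |W y| ≤ S)
    {x : ℝ} (hx : x ≤ hm) :
    |∫ ω, levyDiscount q (tauPlus X x hp ω) * W (x + X (tauPlus X x hp ω).toReal ω) ∂P|
      ≤ (Real.exp (-(σ*t₀)) + (1 - Real.exp (-(σ*t₀))) * (1/2)) * S := by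
  set e := Real.exp (-(σ*t₀)) with he
  have he0 : 0 < e := Real.exp_pos _
  have he1 : e < 1 := Real.exp_lt_one_iff.mpr (by nlinarith)
  set A := ratEventGe X ((hp - hm)/2) t₀ with hAdef
  have hq0 : 0 < q := lt_of_lt_of_le hσ hq
  have hAm : MeasurableSet A := ratEventGe_measurable hMeas _ _
  set F : Ω → ℝ := fun ω =>
    levyDiscount q (tauPlus X x hp ω) * W (x + X (tauPlus X x hp ω).toReal ω) with hF
  have hpt : ∀ ω, ENNReal.ofReal ‖F ω‖
      ≤ (ENNReal.ofReal e + ENNReal.ofReal (1 - e) * A.indicator 1 ω) * ENNReal.ofReal S := by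
    intro ω
    by_cases hfin : tauPlus X x hp ω = ⊤
    · have hz : levyDiscount q (tauPlus X x hp ω) = 0 := by
        rw [hfin]; simp [levyDiscount]
      rw [hF]
      simp only [Real.norm_eq_abs, hz, zero_mul, abs_zero, ENNReal.ofReal_zero]
      exact zero_le
    · have hy : hp ≤ x + X (tauPlus X x hp ω).toReal ω := tauPlus_spec (hrc ω) hfin
      have hWy : |W (x + X (tauPlus X x hp ω).toReal ω)| ≤ S := hW _ hy
      have hd0 : 0 ≤ levyDiscount q (tauPlus X x hp ω) := levyDiscount_nonneg _ _
      rw [hF]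
      simp only [Real.norm_eq_abs, abs_mul, abs_of_nonneg hd0]
      by_cases hAω : ω ∈ A
      · have hcoef : ENNReal.ofReal e + ENNReal.ofReal (1 - e) * A.indicator 1 ω
            = 1 := by
          rw [indicator_of_mem hAω, Pi.one_apply, mul_one,
            ← ENNReal.ofReal_add he0.le (by linarith)]
          rw [show e + (1 - e) = 1 by ring, ENNReal.ofReal_one]
        rw [hcoef, one_mul]
        apply ENNReal.ofReal_le_ofReal
        calc levyDiscount q (tauPlus X x hp ω) * |W (x + X (tauPlus X x hp ω).toReal ω)|
            ≤ 1 * S := mul_le_mul (levyDiscount_le_one hq0.le _) hWy (abs_nonneg _) zero_le_one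
          _ = S := one_mul S
      · have hge : ENNReal.ofReal t₀ ≤ tauPlus X x hp ω := by
          by_contra hcon
          exact hAω (mem_ratEventGe_of_tauPlus_lt (hrc ω) hmp hx ht₀ (not_le.mp hcon))
        have htR : t₀ ≤ (tauPlus X x hp ω).toReal :=
          (ENNReal.ofReal_le_iff_le_toReal hfin).mp hge
        have hd : levyDiscount q (tauPlus X x hp ω) ≤ e := by
          rw [levyDiscount, if_neg hfin, he]
          apply Real.exp_le_exp.mpr
          apply neg_le_neg
          exact mul_le_mul hq htR ht₀.le hq0.le
        have hcoef : ENNReal.ofReal e + ENNReal.ofReal (1 - e) * A.indicator 1 ω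
            = ENNReal.ofReal e := by
          rw [indicator_of_notMem hAω, mul_zero, add_zero]
        rw [hcoef, ← ENNReal.ofReal_mul he0.le]
        apply ENNReal.ofReal_le_ofReal
        exact mul_le_mul hd hWy (abs_nonneg _) he0.le
  have hlin : ∫⁻ ω, (ENNReal.ofReal e + ENNReal.ofReal (1 - e) * A.indicator 1 ω)
      * ENNReal.ofReal S ∂P
      = (ENNReal.ofReal e + ENNReal.ofReal (1 - e) * P A) * ENNReal.ofReal S := by
    rw [lintegral_mul_const' _ _ ENNReal.ofReal_ne_top]
    congr 1
    rw [lintegral_add_left measurable_const, lintegral_const, measure_univ, mul_one,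
      lintegral_const_mul _ (measurable_one.indicator hAm), lintegral_indicator_one hAm]
  have hbound : ∫⁻ ω, ENNReal.ofReal ‖F ω‖ ∂P
      ≤ ENNReal.ofReal ((e + (1 - e) * (1/2)) * S) := by
    calc ∫⁻ ω, ENNReal.ofReal ‖F ω‖ ∂P
        ≤ ∫⁻ ω, (ENNReal.ofReal e + ENNReal.ofReal (1 - e) * A.indicator 1 ω)
            * ENNReal.ofReal S ∂P := lintegral_mono hpt
      _ = (ENNReal.ofReal e + ENNReal.ofReal (1 - e) * P A) * ENNReal.ofReal S := hlin
      _ ≤ (ENNReal.ofReal e + ENNReal.ofReal (1 - e) * ENNReal.ofReal (1/2))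
            * ENNReal.ofReal S := by
          exact mul_le_mul_left (add_le_add le_rfl (mul_le_mul_right hA _)) _
      _ = ENNReal.ofReal ((e + (1 - e) * (1/2)) * S) := by
          rw [← ENNReal.ofReal_mul (by linarith),
            ← ENNReal.ofReal_add he0.le (mul_nonneg (by linarith) (by norm_num)),
            ← ENNReal.ofReal_mul (by nlinarith)]
  calc |∫ ω, F ω ∂P| = ‖∫ ω, F ω ∂P‖ := (Real.norm_eq_abs _).symm
    _ ≤ (∫⁻ ω, ENNReal.ofReal ‖F ω‖ ∂P).toReal := norm_integral_le_lintegral_norm _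
    _ ≤ (ENNReal.ofReal ((e + (1 - e) * (1/2)) * S)).toReal :=
        ENNReal.toReal_mono ENNReal.ofReal_ne_top hbound
    _ = (e + (1 - e) * (1/2)) * S := ENNReal.toReal_ofReal
        (mul_nonneg (by nlinarith) hS)

end CoreEstimate

theorem sup_bound_recursion
    {Ω : Type*} [MeasurableSpace Ω] (P : Measure Ω) [IsProbabilityMeasure P]
    (X : ℝ → Ω → ℝ)
    (hMeas : ∀ t : ℝ, Measurable (X t))
    (hX0 : ∀ᵐ ω ∂P, X 0 ω = 0)
    (hrc : ∀ ω : Ω, ∀ t : ℝ, ContinuousWithinAt (fun s => X s ω) (Set.Ici t) t)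
    (hIndep : ∀ (n : ℕ) (t : Fin (n + 1) → ℝ), Monotone t → 0 ≤ t 0 →
      iIndepFun
        (fun i : Fin n => fun ω => X (t i.succ) ω - X (t i.castSucc) ω) P)
    (hStat : ∀ s t : ℝ, 0 ≤ s → 0 ≤ t →
      Measure.map (fun ω => X (t + s) ω - X s ω) P = Measure.map (X t) P) :
    ∀ σ > (0 : ℝ), ∀ hm hp : ℝ, hm < hp → ∃ δp δm : ℝ,
      δp ∈ Set.Ioo (0 : ℝ) 1 ∧ δm ∈ Set.Ioo (0 : ℝ) 1 ∧
      ∀ q ≥ σ, ∀ lG : ℝ → ℝ, Measurable lG → (∃ C : ℝ, ∀ x, |lG x| ≤ C) →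
        ∀ j : ℕ, 2 ≤ j →
          (⨆ x ∈ Set.Ici hp, |(VSeq P X q hm hp lG j).1 x|) ≤
            δp * ⨆ x ∈ Set.Iic hm, |(VSeq P X q hm hp lG (j - 1)).2 x| ∧
          (⨆ x ∈ Set.Iic hm, |(VSeq P X q hm hp lG j).2 x|) ≤
            δm * ⨆ x ∈ Set.Ici hp, |(VSeq P X q hm hp lG (j - 1)).1 x| := by
  intro σ hσ hm hp hmp
  obtain ⟨ta, hta, hPa⟩ := exists_small_ratEventLe P hMeas hrc hX0
    (c := (hm - hp)/2) (by linarith)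
  obtain ⟨tb, htb, hPb⟩ := exists_small_ratEventGe P hMeas hrc hX0
    (c := (hp - hm)/2) (by linarith)
  set ea := Real.exp (-(σ*ta)) with hea
  set eb := Real.exp (-(σ*tb)) with heb
  have hea0 : 0 < ea := Real.exp_pos _
  have hea1 : ea < 1 := Real.exp_lt_one_iff.mpr (neg_lt_zero.mpr (mul_pos hσ hta))
  have heb0 : 0 < eb := Real.exp_pos _
  have heb1 : eb < 1 := Real.exp_lt_one_iff.mpr (neg_lt_zero.mpr (mul_pos hσ htb))
  refine ⟨ea + (1 - ea) * (1/2), eb + (1 - eb) * (1/2), ⟨by nlinarith, by nlinarith⟩,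
    ⟨by nlinarith, by nlinarith⟩, ?_⟩
  intro q hq lG hlGm hbdd
  obtain ⟨C₀, hC₀⟩ := hbdd
  have hC0' : 0 ≤ max C₀ 0 := le_max_right _ _
  have hC' : ∀ y, |lG y| ≤ max C₀ 0 := fun y => (hC₀ y).trans (le_max_left _ _)
  have hq0 : 0 < q := lt_of_lt_of_le hσ hq
  obtain ⟨K, hK0, hKb⟩ := VSeq_abs_le P X hm hp hq0 hC0' hC'
  intro j hj
  obtain ⟨k, rfl⟩ : ∃ k, j = k + 2 := ⟨j - 2, by omega⟩
  have hj1 : k + 2 - 1 = k + 1 := rfl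
  rw [hj1]
  constructor
  · -- plus side
    have hS0 : 0 ≤ ⨆ x ∈ Set.Iic hm, |(VSeq P X q hm hp lG (k+1)).2 x| := biSup_abs_nonneg _ _
    apply biSup_abs_le (mul_nonneg (by nlinarith) hS0)
    intro x hx
    have hx' : hp ≤ x := hx
    rw [VSeq_fst_eq_of_ge P X q hm hp lG hX0 hx' (k+1)]
    have hdef : (VSeq P X q hm hp lG (k+1)).2 x = ∫ ω, levyDiscount q (tauMinus X x hm ω) *
        (VSeq P X q hm hp lG k).1 (x + X (tauMinus X x hm ω).toReal ω) ∂P := rfl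
    rw [hdef]
    have hW : ∀ y, y ≤ hm →
        |(VSeq P X q hm hp lG k).1 y| ≤ ⨆ x ∈ Set.Iic hm, |(VSeq P X q hm hp lG (k+1)).2 x| := by
      intro y hy
      rw [← VSeq_snd_eq_of_le P X q hm hp lG hX0 hy k]
      exact le_biSup_abs (fun z => (hKb (k+1) z).2) hy
    exact core_minus P hMeas hrc hσ hq hmp hta hPa hS0 hW hx'
  · -- minus side
    have hS0 : 0 ≤ ⨆ x ∈ Set.Ici hp, |(VSeq P X q hm hp lG (k+1)).1 x| := biSup_abs_nonneg _ _
    apply biSup_abs_le (mul_nonneg (by nlinarith) hS0)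
    intro x hx
    have hx' : x ≤ hm := hx
    rw [VSeq_snd_eq_of_le P X q hm hp lG hX0 hx' (k+1)]
    have hdef : (VSeq P X q hm hp lG (k+1)).1 x = ∫ ω, levyDiscount q (tauPlus X x hp ω) *
        (VSeq P X q hm hp lG k).2 (x + X (tauPlus X x hp ω).toReal ω) ∂P := rfl
    rw [hdef]
    have hW : ∀ y, hp ≤ y →
        |(VSeq P X q hm hp lG k).2 y| ≤ ⨆ x ∈ Set.Ici hp, |(VSeq P X q hm hp lG (k+1)).1 x| := by
      intro y hy
      rw [← VSeq_fst_eq_of_ge P X q hm hp lG hX0 hy k]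
      exact le_biSup_abs (fun z => (hKb (k+1) z).1) hy
    exact core_plus P hMeas hrc hσ hq hmp htb hPb hS0 hW hx'
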